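/- If D is a 3-anti-traceable oriented graph with |V(D)| ≥ 5 and |V(D)| even, then D has a hamiltonian anti-directed cycle. -/

import Mathlib

variable {V : Type*}

/-- An oriented graph: no 2-cycles (and hence no loops). -/
def Oriented (A : V → V → Prop) : Prop := ∀ u v, A u v → ¬ A v u

/-- `AltPath A b l` : the consecutive vertices of `l` are joined by arcs whose
directions alternate, the first arc being forward iff `b = true`. -/
def AltPath (A : V → V → Prop) : Bool → List V → Prop
  | _, [] => True
  | _, [_] => True
  | b, x :: y :: rest => (if b then A x y else A y x) ∧ AltPath A (!b) (y :: rest)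

/-- An anti-directed path: distinct vertices with alternating arcs. -/
def IsAntiPath (A : V → V → Prop) (l : List V) : Prop :=
  l.Nodup ∧ ∃ b : Bool, AltPath A b l

/-- The induced subdigraph on the vertex set `S` has a hamiltonian anti-directed path. -/
def AntiTraceableOn [DecidableEq V] (A : V → V → Prop) (S : Finset V) : Prop :=
  ∃ l : List V, l.Nodup ∧ l.toFinset = S ∧ ∃ b : Bool, AltPath A b l

/-- The digraph has a hamiltonian anti-directed path. -/
def AntiTraceable [Fintype V] [DecidableEq V] (A : V → V → Prop) : Prop :=
  AntiTraceableOn A Finset.univ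

/-- `k`-anti-traceable: order at least `k` and every induced subdigraph on `k`
vertices has a hamiltonian anti-directed path. -/
def KAntiTraceable [Fintype V] [DecidableEq V] (k : ℕ) (A : V → V → Prop) : Prop :=
  k ≤ Fintype.card V ∧ ∀ S : Finset V, S.card = k → AntiTraceableOn A S

/-- An anti-directed cycle: a cyclic sequence of distinct vertices, of even
length at least 4, in which even-indexed vertices are sources and odd-indexed
vertices are sinks of the two incident arcs. -/
def AltCycle (A : V → V → Prop) (l : List V) : Prop :=
  l.Nodup ∧ 4 ≤ l.length ∧ l.length % 2 = 0 ∧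
  ∀ i : Fin l.length,
    if i.1 % 2 = 0 then
      A (l.get i) (l.get ⟨(i.1 + 1) % l.length, Nat.mod_lt _ (Nat.zero_lt_of_lt i.2)⟩)
    else
      A (l.get ⟨(i.1 + 1) % l.length, Nat.mod_lt _ (Nat.zero_lt_of_lt i.2)⟩) (l.get i)

/-- The arcs among `{a,b,c}` form a subset of the arcs of a directed triangle. -/
def SubDirTriangle (A : V → V → Prop) (a b c : V) : Prop :=
  (¬ A b a ∧ ¬ A c b ∧ ¬ A a c) ∨ (¬ A a b ∧ ¬ A b c ∧ ¬ A c a)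

section Aux

variable {A : V → V → Prop}

/-- The basic consequence of 3-anti-traceability on a triple of distinct vertices:
some vertex of the triple is a common source or a common sink of arcs to the
other two. -/
lemma mid_aux [Fintype V] [DecidableEq V] (h3 : KAntiTraceable 3 A) {u v w : V}
    (huv : u ≠ v) (huw : u ≠ w) (hvw : v ≠ w) :
    (A u v ∧ A w v) ∨ (A v u ∧ A v w) ∨ (A v w ∧ A u w) ∨ (A w v ∧ A w u) ∨
      (A w u ∧ A v u) ∨ (A u w ∧ A u v) := by
  have hScard : ({u, v, w} : Finset V).card = 3 :=
    Finset.card_eq_three.mpr ⟨u, v, w, huv, huw, hvw, rfl⟩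
  obtain ⟨l, hnd, hS, bb, hp⟩ := h3.2 _ hScard
  have hlen : l.length = 3 := by
    have h := List.toFinset_card_of_nodup hnd
    rw [hS, hScard] at h
    omega
  obtain ⟨x, y, z, rfl⟩ : ∃ x y z, l = [x, y, z] := by
    match l, hlen with
    | [x, y, z], _ => exact ⟨x, y, z, rfl⟩
  have hu : u = x ∨ u = y ∨ u = z := by
    have : u ∈ ({u, v, w} : Finset V) := by simp
    rw [← hS] at this; simpa using this
  have hv : v = x ∨ v = y ∨ v = z := by
    have : v ∈ ({u, v, w} : Finset V) := by simp
    rw [← hS] at this; simpa using this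
  have hw : w = x ∨ w = y ∨ w = z := by
    have : w ∈ ({u, v, w} : Finset V) := by simp
    rw [← hS] at this; simpa using this
  have harc : (A x y ∧ A z y) ∨ (A y x ∧ A y z) := by
    cases bb with
    | true => left; simpa [AltPath] using hp
    | false => right; simpa [AltPath] using hp
  rcases hu with rfl | rfl | rfl <;> rcases hv with rfl | rfl | rfl <;>
    rcases hw with rfl | rfl | rfl <;> tauto

lemma trans_aux [Fintype V] [DecidableEq V] (hA : Oriented A) (h3 : KAntiTraceable 3 A)
    {u v w : V} (h1 : A u v) (h2 : A v w) : A u w := by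
  have hirr : ∀ x, ¬ A x x := fun x h => hA x x h h
  have huv : u ≠ v := by rintro rfl; exact hirr _ h1
  have hvw : v ≠ w := by rintro rfl; exact hirr _ h2
  have huw : u ≠ w := by rintro rfl; exact hA _ _ h1 h2
  have hm := mid_aux h3 huv huw hvw
  have n1 := hA _ _ h1
  have n2 := hA _ _ h2
  tauto

lemma no2_aux [Fintype V] [DecidableEq V] (h3 : KAntiTraceable 3 A)
    {u v w : V} (huv : u ≠ v) (huw : u ≠ w) (hvw : v ≠ w)
    (n1 : ¬ A u v) (n2 : ¬ A v u) (n3 : ¬ A u w) (n4 : ¬ A w u) : False := by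
  have hm := mid_aux h3 huv huw hvw
  tauto

lemma twin_aux [Fintype V] [DecidableEq V] (hA : Oriented A) (h3 : KAntiTraceable 3 A)
    {u v : V} (huv : u ≠ v) (n1 : ¬ A u v) (n2 : ¬ A v u) (w : V) :
    (A w u → A w v) ∧ (A u w → A v w) := by
  have hirr : ∀ x, ¬ A x x := fun x h => hA x x h h
  by_cases hwu : w = u
  · subst hwu
    exact ⟨fun h => absurd h (hirr w), fun h => absurd h (hirr w)⟩
  by_cases hwv : w = v
  · subst hwv
    exact ⟨fun h => absurd h n2, fun h => absurd h n1⟩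
  have hm := mid_aux h3 huv (fun h => hwu h.symm) (fun h => hwv h.symm)
  tauto

end Aux

theorem stmt4 [Fintype V] [DecidableEq V] (A : V → V → Prop)
    (hA : Oriented A) (h3 : KAntiTraceable 3 A)
    (hcard : 5 ≤ Fintype.card V) (heven : Even (Fintype.card V)) :
    ∃ l : List V, AltCycle A l ∧ l.toFinset = Finset.univ := by
  classical
  have hirr : ∀ x, ¬ A x x := fun x h => hA x x h h
  obtain ⟨m, hm⟩ := heven
  have hm3 : 3 ≤ m := by omega
  set f : V → V → Bool := fun u v => decide (¬ A v u) with hf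
  have hf_iff : ∀ u v : V, f u v = true ↔ ¬ A v u := by
    intro u v; simp [hf]
  have ftotal : ∀ a b : V, f a b || f b a := by
    intro a b
    rw [Bool.or_eq_true, hf_iff, hf_iff]
    rcases Classical.em (A b a) with h | h
    · exact Or.inr (hA _ _ h)
    · exact Or.inl h
  have ftrans : ∀ a b c : V, f a b → f b c → f a c := by
    intro a b c hab hbc
    rw [hf_iff] at hab hbc ⊢
    intro hca
    by_cases hab' : a = b
    · subst hab'; exact hbc hca
    by_cases hbc' : b = c
    · subst hbc'; exact hab hca
    by_cases hac' : a = c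
    · subst hac'; exact hirr _ hca
    have nab : ¬ A a b := fun h => hbc (trans_aux hA h3 hca h)
    exact hbc ((twin_aux hA h3 hab' nab hab c).1 hca)
  set s : List V := ((Finset.univ : Finset V).toList).mergeSort f with hs
  have hperm : s.Perm Finset.univ.toList := List.mergeSort_perm _ f
  have hsnd : s.Nodup := hperm.nodup_iff.mpr (Finset.nodup_toList _)
  have hslen : s.length = m + m := by
    rw [hperm.length_eq, Finset.length_toList, Finset.card_univ, hm]
  have hsorted : s.Pairwise fun a b => ¬ A b a := by
    have h := List.pairwise_mergeSort (le := f) ftrans ftotal (Finset.univ.toList)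
    exact h.imp (fun h' => (hf_iff _ _).mp h')
  have hg := List.pairwise_iff_getElem.mp hsorted
  have getinj := List.nodup_iff_injective_get.mp hsnd
  -- the key ordering property: indices at distance ≥ 2 give an arc forward
  have ord : ∀ (i j : ℕ) (hi : i < s.length) (hj : j < s.length), i + 2 ≤ j →
      A (s.get ⟨i, hi⟩) (s.get ⟨j, hj⟩) := by
    intro i j hi hj hij
    by_contra hnc
    have hi1 : i + 1 < s.length := by omega
    set u := s.get ⟨i, hi⟩ with hu
    set v := s.get ⟨i + 1, hi1⟩ with hv
    set w := s.get ⟨j, hj⟩ with hw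
    have huv : u ≠ v := fun h => by
      have h2 := getinj h; rw [Fin.ext_iff] at h2; simp at h2
    have huw : u ≠ w := fun h => by
      have h2 := getinj h; rw [Fin.ext_iff] at h2; simp at h2; omega
    have hvw : v ≠ w := fun h => by
      have h2 := getinj h; rw [Fin.ext_iff] at h2; simp at h2; omega
    have n_vu : ¬ A v u := by
      have := hg i (i + 1) hi hi1 (by omega)
      simpa [List.get_eq_getElem, hu, hv] using this
    have n_wv : ¬ A w v := by
      have := hg (i + 1) j hi1 hj (by omega)
      simpa [List.get_eq_getElem, hv, hw] using this
    have n_wu : ¬ A w u := by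
      have := hg i j hi hj (by omega)
      simpa [List.get_eq_getElem, hu, hw] using this
    have n_uv : ¬ A u v := fun h => n_wv ((twin_aux hA h3 huw hnc n_wu v).2 h)
    have n_vw : ¬ A v w := fun h =>
      n_vu ((twin_aux hA h3 (fun h' => huw h'.symm) n_wu hnc v).1 h)
    exact no2_aux h3 huv huw hvw n_uv n_vu hnc n_wu
  -- build the interleaved hamiltonian anti-directed cycle
  have hFb : ∀ k : ℕ, k < m + m → (if k % 2 = 0 then k / 2 else m + k / 2) < s.length := by
    intro k hk; rw [hslen]; split <;> omega
  set F : Fin (m + m) → V := fun k => s.get ⟨_, hFb k.1 k.2⟩ with hF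
  set l : List V := List.ofFn F with hl
  have hlen : l.length = m + m := by simp [hl]
  have hFinj : Function.Injective F := by
    intro k1 k2 h
    rw [hF] at h
    have h2 := getinj h
    rw [Fin.ext_iff] at h2
    apply Fin.ext
    dsimp at h2
    split at h2 <;> split at h2 <;> omega
  have hlnd : l.Nodup := by rw [hl]; exact List.nodup_ofFn.mpr hFinj
  have hltf : l.toFinset = Finset.univ := by
    apply Finset.eq_univ_of_card
    rw [List.toFinset_card_of_nodup hlnd, hlen, hm]
  have hgetl : ∀ (j : ℕ) (hj : j < l.length) (r : ℕ) (hr : r < s.length),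
      (if j % 2 = 0 then j / 2 else m + j / 2) = r → l.get ⟨j, hj⟩ = s.get ⟨r, hr⟩ := by
    intro j hj r hr hjr
    have hjm : j < m + m := by omega
    have e1 : l.get ⟨j, hj⟩ = F ⟨j, hjm⟩ := by
      rw [List.get_eq_getElem]
      exact List.getElem_ofFn (f := F) (i := j) (by simpa [hl] using hj)
    rw [e1, hF]
    exact congrArg s.get (Fin.ext hjr)
  refine ⟨l, ⟨hlnd, by omega, by omega, ?_⟩, hltf⟩
  rintro ⟨k, hk⟩
  dsimp only
  have hk' : k < m + m := by omega
  rcases Nat.even_or_odd k with he | ho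
  · have hk2 : k % 2 = 0 := Nat.even_iff.mp he
    rw [if_pos hk2]
    have hlt : k + 1 < l.length := by omega
    have hmod : (k + 1) % l.length = k + 1 := Nat.mod_eq_of_lt hlt
    rw [hgetl k hk (k / 2) (by rw [hslen]; omega) (by rw [if_pos hk2])]
    rw [hgetl ((k + 1) % l.length) _ (m + k / 2) (by rw [hslen]; omega)
      (by rw [hmod, if_neg (by omega)]; omega)]
    exact ord (k / 2) (m + k / 2) (by rw [hslen]; omega) (by rw [hslen]; omega) (by omega)
  · have hk2 : k % 2 = 1 := Nat.odd_iff.mp ho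
    rw [if_neg (by omega)]
    by_cases hend : k + 1 = m + m
    · have hmod : (k + 1) % l.length = 0 := by rw [hlen, hend]; exact Nat.mod_self _
      rw [hgetl ((k + 1) % l.length) _ 0 (by rw [hslen]; omega) (by rw [hmod]; simp)]
      rw [hgetl k hk (m + k / 2) (by rw [hslen]; omega) (by rw [if_neg (by omega)])]
      exact ord 0 (m + k / 2) (by rw [hslen]; omega) (by rw [hslen]; omega) (by omega)
    · have hlt : k + 1 < l.length := by omega
      have hmod : (k + 1) % l.length = k + 1 := Nat.mod_eq_of_lt hlt
      rw [hgetl ((k + 1) % l.length) _ ((k + 1) / 2) (by rw [hslen]; omega)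
        (by rw [hmod, if_pos (by omega)])]
      rw [hgetl k hk (m + k / 2) (by rw [hslen]; omega) (by rw [if_neg (by omega)])]
      exact ord ((k + 1) / 2) (m + k / 2) (by rw [hslen]; omega) (by rw [hslen]; omega)
        (by omega)
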